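/- arXiv:1712.00071 — 3 statements merged into one kernel-verified Lean document; each statement's English description precedes it below -/
import Mathlib

section
/- Let F_q be a finite field and d a positive integer. For a monic polynomial f of degree d in F_q[x], let \Omega(f) denote the total number of irreducible factors of f counted with multiplicity, and define sgn(f) = (-1)^{d - \Omega(f)}. Then \sum_{f} sgn(f) = q^{\lceil d/2 \rceil}, where the sum runs over all monic polynomials f of degree d in F_q[x]. -/
open Polynomial Finset UniqueFactorizationMonoid

set_option linter.unusedSectionVars false
set_option maxHeartbeats 1000000

/-- `Ω(f)`: the number of irreducible factors of `f`, counted with multiplicity. -/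
noncomputable def bigOmega {F : Type*} [Field F] (f : F[X]) : ℕ :=
  Multiset.card (UniqueFactorizationMonoid.factors f)

open scoped Classical in
lemma multiset_sq_sum {α : Type*} [DecidableEq α] (s : Multiset α) :
    ∑ t ∈ s.powerset.toFinset, (-1:ℤ) ^ (Multiset.card t) =
      if ∃ r, s = r + r then 1 else 0 := by
  induction s using Multiset.strongInductionOn with
  | ih s ih =>
  rcases s.empty_or_exists_mem with rfl | ⟨a, ha⟩
  · rw [if_pos ⟨0, by simp⟩]
    simp
  · have hsplit : s = Multiset.replicate (s.count a) a + s.filter (fun x => ¬ x = a) := by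
      rw [← Multiset.filter_eq']
      exact (Multiset.filter_add_not _ s).symm
    set k := s.count a with hk
    set s' := s.filter (fun x => ¬ x = a) with hs'
    have has' : a ∉ s' := by
      intro h
      exact (Multiset.of_mem_filter h) rfl
    have hlt : s' < s := lt_of_le_of_ne (Multiset.filter_le _ s) (by
      intro h; exact has' (h ▸ ha))
    have key : ∑ t ∈ s.powerset.toFinset, (-1:ℤ) ^ (Multiset.card t)
        = ∑ p ∈ (Finset.range (k+1)) ×ˢ s'.powerset.toFinset,
            (-1:ℤ) ^ (p.1 + Multiset.card p.2) := by
      refine Finset.sum_nbij' (i := fun t => (t.count a, t.filter (fun x => ¬ x = a)))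
        (j := fun p => Multiset.replicate p.1 a + p.2) ?_ ?_ ?_ ?_ ?_
      · intro t ht
        rw [Multiset.mem_toFinset, Multiset.mem_powerset] at ht
        rw [Finset.mem_product, Finset.mem_range, Multiset.mem_toFinset, Multiset.mem_powerset]
        exact ⟨Nat.lt_succ_of_le (Multiset.count_le_of_le a ht),
          Multiset.filter_le_filter _ ht⟩
      · rintro ⟨i, t'⟩ hp
        rw [Finset.mem_product, Finset.mem_range, Multiset.mem_toFinset,
          Multiset.mem_powerset] at hp
        rw [Multiset.mem_toFinset, Multiset.mem_powerset, hsplit]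
        exact add_le_add ((Multiset.replicate_le_replicate a).2 (Nat.lt_succ_iff.1 hp.1)) hp.2
      · intro t ht
        simp only
        rw [← Multiset.filter_eq']
        exact Multiset.filter_add_not _ t
      · rintro ⟨i, t'⟩ hp
        rw [Finset.mem_product, Finset.mem_range, Multiset.mem_toFinset,
          Multiset.mem_powerset] at hp
        have hat' : a ∉ t' := fun h => has' (Multiset.mem_of_le hp.2 h)
        have h1 : (Multiset.replicate i a + t').count a = i := by
          rw [Multiset.count_add, Multiset.count_replicate_self,
            Multiset.count_eq_zero.2 hat', add_zero]
        have h2 : (Multiset.replicate i a + t').filter (fun x => ¬ x = a) = t' := by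
          rw [Multiset.filter_add]
          have hz : (Multiset.replicate i a).filter (fun x => ¬ x = a) = 0 := by
            rw [Multiset.filter_eq_nil]
            intro b hb hb2
            exact hb2 (Multiset.eq_of_mem_replicate hb)
          have ht2 : t'.filter (fun x => ¬ x = a) = t' := by
            rw [Multiset.filter_eq_self]
            intro b hb hb2
            exact hat' (hb2 ▸ hb)
          rw [hz, ht2, zero_add]
        simp only [h1, h2]
      · intro t ht
        rw [Multiset.mem_toFinset, Multiset.mem_powerset] at ht
        simp only
        congr 1
        conv_lhs => rw [← Multiset.filter_add_not (fun x => x = a) t, Multiset.card_add,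
          Multiset.filter_eq', Multiset.card_replicate]
    have hiff : (∃ r, s = r + r) ↔ Even k ∧ ∃ r', s' = r' + r' := by
      constructor
      · rintro ⟨r, hr⟩
        refine ⟨⟨r.count a, by rw [hk, hr, Multiset.count_add]⟩,
          ⟨r.filter (fun x => ¬ x = a), by rw [hs', hr, Multiset.filter_add]⟩⟩
      · rintro ⟨⟨m, hm⟩, ⟨r', hr'⟩⟩
        refine ⟨Multiset.replicate m a + r', ?_⟩
        rw [hsplit, hm, hr', Multiset.replicate_add]
        exact add_add_add_comm _ _ _ _
    rw [key, Finset.sum_product]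
    have hrw : ∀ i ∈ Finset.range (k+1), ∑ t' ∈ s'.powerset.toFinset, (-1:ℤ) ^ (i + Multiset.card t')
        = (-1:ℤ)^i * ∑ t' ∈ s'.powerset.toFinset, (-1:ℤ) ^ (Multiset.card t') := by
      intro i _
      rw [Finset.mul_sum]
      exact Finset.sum_congr rfl fun t' _ => pow_add _ _ _
    rw [Finset.sum_congr rfl hrw, ← Finset.sum_mul, neg_one_geom_sum, ih s' hlt]
    by_cases hke : Even k
    · rw [if_neg (by simpa [Nat.even_add_one] using hke), one_mul]
      simp only [hiff, hke, true_and]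
    · rw [if_pos (Nat.even_add_one.2 hke), zero_mul,
        if_neg (by rw [hiff]; exact fun h => hke h.1)]

section MonSet

variable {F : Type*} [Field F] [Fintype F]

lemma phi_monic (d : ℕ) (c : Fin d → F) :
    (X ^ d + ∑ i : Fin d, C (c i) * X ^ (i : ℕ)).Monic :=
  monic_X_pow_add (degree_sum_fin_lt c)

lemma phi_natDegree (d : ℕ) (c : Fin d → F) :
    (X ^ d + ∑ i : Fin d, C (c i) * X ^ (i : ℕ)).natDegree = d := by
  have h : (∑ i : Fin d, C (c i) * X ^ (i : ℕ)).degree < (X ^ d : F[X]).degree := by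
    rw [degree_X_pow]; exact degree_sum_fin_lt c
  apply natDegree_eq_of_degree_eq_some
  rw [degree_add_eq_left_of_degree_lt h, degree_X_pow]

lemma phi_coeff (d : ℕ) (c : Fin d → F) (j : Fin d) :
    (X ^ d + ∑ i : Fin d, C (c i) * X ^ (i : ℕ)).coeff (j : ℕ) = c j := by
  rw [coeff_add, coeff_X_pow, if_neg (Nat.ne_of_lt j.2), zero_add, finset_sum_coeff]
  rw [Finset.sum_eq_single j]
  · rw [coeff_C_mul, coeff_X_pow, if_pos rfl, mul_one]
  · intro i _ hij
    rw [coeff_C_mul, coeff_X_pow, if_neg (fun h => hij (Fin.ext h.symm)), mul_zero]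
  · intro h; exact absurd (Finset.mem_univ j) h

lemma phi_injective (d : ℕ) : Function.Injective
    (fun c : Fin d → F => (X ^ d + ∑ i : Fin d, C (c i) * X ^ (i : ℕ) : F[X])) := by
  intro c c' h
  funext j
  rw [← phi_coeff d c j, ← phi_coeff d c' j]
  simp only at h
  rw [h]

/-- The Finset of monic polynomials of degree `d`. -/
noncomputable def monSet (F : Type*) [Field F] [Fintype F] (d : ℕ) : Finset F[X] :=
  Finset.map ⟨_, phi_injective d⟩ Finset.univ

lemma mem_monSet {d : ℕ} {f : F[X]} :
    f ∈ monSet F d ↔ f.Monic ∧ f.natDegree = d := by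
  rw [monSet, Finset.mem_map]
  constructor
  · rintro ⟨c, -, rfl⟩
    exact ⟨phi_monic d c, phi_natDegree d c⟩
  · rintro ⟨hm, hdeg⟩
    refine ⟨fun i => f.coeff i, Finset.mem_univ _, ?_⟩
    have hds : (∑ i : Fin d, C (f.coeff (i : ℕ)) * X ^ (i : ℕ)).degree < (d : WithBot ℕ) :=
      degree_sum_fin_lt _
    show X ^ d + _ = f
    ext n
    rcases lt_trichotomy n d with hn | hn | hn
    · exact phi_coeff d _ ⟨n, hn⟩
    · rw [hn, coeff_add, coeff_X_pow, if_pos rfl, ← hdeg, hm.coeff_natDegree, hdeg,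
        coeff_eq_zero_of_degree_lt hds, add_zero]
    · have h1 : f.coeff n = 0 :=
        coeff_eq_zero_of_natDegree_lt (by rw [hdeg]; exact hn)
      have h2 : (∑ i : Fin d, C (f.coeff (i : ℕ)) * X ^ (i : ℕ)).coeff n = 0 :=
        coeff_eq_zero_of_degree_lt (lt_trans hds (by exact_mod_cast hn))
      rw [coeff_add, coeff_X_pow, if_neg (Nat.ne_of_gt hn), zero_add, h1, h2]

lemma card_monSet (d : ℕ) : (monSet F d).card = Fintype.card F ^ d := by
  rw [monSet, Finset.card_map, Finset.card_univ, Fintype.card_fun, Fintype.card_fin]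

end MonSet

section Factors

variable {F : Type*} [Field F] [DecidableEq F]

lemma monic_of_nf {f p : F[X]} (hp : p ∈ normalizedFactors f) : p.Monic := by
  have h1 := normalize_normalized_factor p hp
  have h2 := (irreducible_of_normalized_factor p hp).ne_zero
  rw [← h1]
  exact monic_normalize h2

lemma monic_multiset_prod {t : Multiset F[X]} (h : ∀ p ∈ t, p.Monic) : t.prod.Monic := by
  have := monic_multiset_prod_of_monic t id h
  rwa [Multiset.map_id] at this

lemma prod_nf {f : F[X]} (hf : f.Monic) : (normalizedFactors f).prod = f :=
  eq_of_monic_of_associated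
    (monic_multiset_prod (fun p hp => monic_of_nf hp)) hf
    (prod_normalizedFactors hf.ne_zero)

lemma bigOmega_eq_card_nf (f : F[X]) : bigOmega f = Multiset.card (normalizedFactors f) := by
  rw [bigOmega, normalizedFactors, Multiset.card_map]

lemma natDegree_eq_sum_nf {f : F[X]} (hf : f.Monic) :
    f.natDegree = ((normalizedFactors f).map natDegree).sum := by
  conv_lhs => rw [← prod_nf hf]
  exact natDegree_multiset_prod _ (zero_notMem_normalizedFactors f)

lemma bigOmega_le_natDegree {f : F[X]} (hf : f.Monic) : bigOmega f ≤ f.natDegree := by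
  rw [bigOmega_eq_card_nf, natDegree_eq_sum_nf hf]
  calc Multiset.card (normalizedFactors f)
      = ((normalizedFactors f).map (fun _ => 1)).sum := by
        rw [Multiset.map_const', Multiset.sum_replicate, smul_eq_mul, mul_one]
    _ ≤ ((normalizedFactors f).map natDegree).sum :=
        Multiset.sum_map_le_sum_map _ _ (fun p hp =>
          (irreducible_of_normalized_factor p hp).natDegree_pos)

lemma nf_of_sub {f : F[X]} (t : Multiset F[X]) (htf : t ≤ normalizedFactors f) :
    normalizedFactors t.prod = t := by
  rw [normalizedFactors_prod_eq _ (fun p hp => irreducible_of_normalized_factor p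
    (Multiset.mem_of_le htf hp))]
  rw [Multiset.map_congr rfl (fun p hp => normalize_normalized_factor p
    (Multiset.mem_of_le htf hp))]
  exact Multiset.map_id' t

end Factors

section Main

variable {F : Type*} [Field F] [Fintype F]

/-- partial sums -/
noncomputable def Tsum (F : Type*) [Field F] [Fintype F] (a : ℕ) : ℤ :=
  ∑ f ∈ monSet F a, (-1:ℤ) ^ (bigOmega f)

open scoped Classical in
lemma count_squares (d : ℕ) [DecidableEq F] :
    ∑ f ∈ monSet F d, (if ∃ r, normalizedFactors f = r + r then (1:ℤ) else 0) =
      if Even d then ((Fintype.card F : ℤ)) ^ (d/2) else 0 := by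
  rw [Finset.sum_boole]
  by_cases hd : Even d
  · obtain ⟨e, he⟩ := hd
    rw [if_pos ⟨e, he⟩]
    have hcard : (monSet F e).card
        = (Finset.filter (fun f => ∃ r, normalizedFactors f = r + r) (monSet F d)).card := by
      apply Finset.card_bij (i := fun r _ => r * r)
      · intro r hr
        rw [mem_monSet] at hr
        rw [Finset.mem_filter, mem_monSet]
        refine ⟨⟨hr.1.mul hr.1, ?_⟩, ⟨normalizedFactors r, ?_⟩⟩
        · rw [hr.1.natDegree_mul hr.1, hr.2, he]
        · rw [normalizedFactors_mul hr.1.ne_zero hr.1.ne_zero]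
      · intro r hr u hu h
        rw [mem_monSet] at hr hu
        have hnf : normalizedFactors r + normalizedFactors r
            = normalizedFactors u + normalizedFactors u := by
          rw [← normalizedFactors_mul hr.1.ne_zero hr.1.ne_zero,
            ← normalizedFactors_mul hu.1.ne_zero hu.1.ne_zero, h]
        have hnf2 : normalizedFactors r = normalizedFactors u := by
          ext b
          have := congrArg (Multiset.count b) hnf
          simp only [Multiset.count_add] at this
          omega
        rw [← prod_nf hr.1, ← prod_nf hu.1, hnf2]
      · intro f hf
        rw [Finset.mem_filter, mem_monSet] at hf
        obtain ⟨⟨hm, hdeg⟩, ⟨m, hmf⟩⟩ := hf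
        have hmle : m ≤ normalizedFactors f := by
          rw [hmf]; exact Multiset.le_add_right _ _
        have hmm : (m.prod).Monic :=
          monic_multiset_prod (fun p hp => monic_of_nf (Multiset.mem_of_le hmle hp))
        have hprod : m.prod * m.prod = f := by
          rw [← Multiset.prod_add, ← hmf, prod_nf hm]
        refine ⟨m.prod, ?_, hprod⟩
        rw [mem_monSet]
        refine ⟨hmm, ?_⟩
        have hdd : m.prod.natDegree + m.prod.natDegree = d := by
          rw [← hmm.natDegree_mul hmm, hprod, hdeg]
        omega
    rw [← hcard, card_monSet]
    have h2 : d / 2 = e := by omega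
    rw [h2, Nat.cast_pow]
  · rw [if_neg hd, Finset.filter_false_of_mem, Finset.card_empty, Nat.cast_zero]
    rintro f hf ⟨m, hmf⟩
    rw [mem_monSet] at hf
    apply hd
    have hmle : m ≤ normalizedFactors f := by
      rw [hmf]; exact Multiset.le_add_right _ _
    have hmm : (m.prod).Monic :=
      monic_multiset_prod (fun p hp => monic_of_nf (Multiset.mem_of_le hmle hp))
    have hprod : m.prod * m.prod = f := by
      rw [← Multiset.prod_add, ← hmf, prod_nf hf.1]
    refine ⟨m.prod.natDegree, ?_⟩
    rw [← hf.2, ← hprod, hmm.natDegree_mul hmm]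


open scoped Classical in
lemma U_eq [DecidableEq F] (d : ℕ) :
    ∑ a ∈ Finset.range (d+1), Tsum F a * (Fintype.card F : ℤ)^(d-a) =
      if Even d then ((Fintype.card F : ℤ)) ^ (d/2) else 0 := by
  have step1 : ∀ a ∈ Finset.range (d+1),
      Tsum F a * (Fintype.card F : ℤ)^(d-a)
        = ∑ p ∈ monSet F a ×ˢ monSet F (d-a), (-1:ℤ)^(bigOmega p.1) := by
    intro a _
    rw [Finset.sum_product, Tsum, Finset.sum_mul]
    refine Finset.sum_congr rfl fun g _ => ?_
    show _ = ∑ _y ∈ monSet F (d-a), (-1:ℤ)^(bigOmega g)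
    rw [Finset.sum_const, card_monSet, nsmul_eq_mul, Nat.cast_pow]
    ring
  rw [Finset.sum_congr rfl step1, Finset.sum_sigma']
  have hmaps : ∀ x ∈ (Finset.range (d+1)).sigma (fun a => monSet F a ×ˢ monSet F (d-a)),
      x.2.1 * x.2.2 ∈ monSet F d := by
    rintro ⟨a, g, h⟩ hx
    obtain ⟨ha, hgh⟩ := Finset.mem_sigma.1 hx
    rw [Finset.mem_product] at hgh
    obtain ⟨hg, hga⟩ := mem_monSet.1 hgh.1
    obtain ⟨hh, hha⟩ := mem_monSet.1 hgh.2
    rw [Finset.mem_range] at ha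
    rw [mem_monSet]
    refine ⟨hg.mul hh, ?_⟩
    rw [hg.natDegree_mul hh, hga, hha]
    omega
  rw [← Finset.sum_fiberwise_of_maps_to hmaps, ← count_squares d]
  refine Finset.sum_congr rfl fun f hf => ?_
  obtain ⟨hm, hdeg⟩ := mem_monSet.1 hf
  have hf0 : f ≠ 0 := hm.ne_zero
  rw [← multiset_sq_sum (normalizedFactors f)]
  refine Finset.sum_nbij' (i := fun x => normalizedFactors x.2.1)
    (j := fun t => ⟨(t.prod).natDegree, (t.prod, ((normalizedFactors f) - t).prod)⟩)
    ?_ ?_ ?_ ?_ ?_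
  · rintro ⟨a, g, h⟩ hx
    obtain ⟨hsig, heq⟩ := Finset.mem_filter.1 hx
    obtain ⟨ha, hgh⟩ := Finset.mem_sigma.1 hsig
    rw [Finset.mem_product] at hgh
    obtain ⟨hg, hga⟩ := mem_monSet.1 hgh.1
    obtain ⟨hh, hha⟩ := mem_monSet.1 hgh.2
    rw [Multiset.mem_toFinset, Multiset.mem_powerset]
    exact (dvd_iff_normalizedFactors_le_normalizedFactors hg.ne_zero hf0).1 ⟨h, heq.symm⟩
  · intro t ht
    rw [Multiset.mem_toFinset, Multiset.mem_powerset] at ht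
    have hgm : t.prod.Monic :=
      monic_multiset_prod (fun p hp => monic_of_nf (Multiset.mem_of_le ht hp))
    have hhm : ((normalizedFactors f) - t).prod.Monic :=
      monic_multiset_prod (fun p hp => monic_of_nf (Multiset.mem_of_le (tsub_le_self) hp))
    have hprod : t.prod * ((normalizedFactors f) - t).prod = f := by
      rw [← Multiset.prod_add, add_tsub_cancel_of_le ht, prod_nf hm]
    have hdle : t.prod.natDegree ≤ d := by
      rw [← hdeg]
      exact natDegree_le_of_dvd ⟨_, hprod.symm⟩ hf0
    rw [Finset.mem_filter, Finset.mem_sigma, Finset.mem_product]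
    refine ⟨⟨Finset.mem_range.2 (Nat.lt_succ_of_le hdle), ?_, ?_⟩, hprod⟩
    · exact mem_monSet.2 ⟨hgm, rfl⟩
    · refine mem_monSet.2 ⟨hhm, ?_⟩
      show ((normalizedFactors f) - t).prod.natDegree = d - t.prod.natDegree
      have : t.prod.natDegree + ((normalizedFactors f) - t).prod.natDegree = d := by
        rw [← hgm.natDegree_mul hhm, hprod, hdeg]
      omega
  · rintro ⟨a, g, h⟩ hx
    obtain ⟨hsig, heq⟩ := Finset.mem_filter.1 hx
    obtain ⟨ha, hgh⟩ := Finset.mem_sigma.1 hsig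
    rw [Finset.mem_product] at hgh
    obtain ⟨hg, hga⟩ := mem_monSet.1 hgh.1
    obtain ⟨hh, hha⟩ := mem_monSet.1 hgh.2
    have h1 : (normalizedFactors g).prod = g := prod_nf hg
    have h2 : normalizedFactors f - normalizedFactors g = normalizedFactors h := by
      rw [← heq, normalizedFactors_mul hg.ne_zero hh.ne_zero, add_tsub_cancel_left]
    simp only [h1, h2, prod_nf hh, hga]
  · intro t ht
    rw [Multiset.mem_toFinset, Multiset.mem_powerset] at ht
    exact nf_of_sub t ht
  · rintro ⟨a, g, h⟩ hx
    rw [bigOmega_eq_card_nf]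

end Main

/-- The sum of `sgn(f) = (-1)^(d - Ω(f))` over all monic degree-`d` polynomials over
`F_q` equals `q^⌈d/2⌉`. -/
theorem statement7 (F : Type*) [Field F] [Fintype F] (d : ℕ) (hd : 0 < d) :
    ∑ᶠ f ∈ {f : F[X] | f.Monic ∧ f.natDegree = d}, (-1 : ℤ) ^ (d - bigOmega f) =
      (Fintype.card F : ℤ) ^ ((d + 1) / 2) := by
  classical
  have hset : {f : F[X] | f.Monic ∧ f.natDegree = d} = ↑(monSet F d) := by
    ext f
    simp [mem_monSet]
  rw [hset, finsum_mem_coe_finset]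
  have hterm : ∀ f ∈ monSet F d,
      (-1:ℤ)^(d - bigOmega f) = (-1:ℤ)^d * (-1:ℤ)^(bigOmega f) := by
    intro f hf
    obtain ⟨hm, hdeg⟩ := mem_monSet.1 hf
    have hle : bigOmega f ≤ d := hdeg ▸ bigOmega_le_natDegree hm
    conv_rhs => rw [← Nat.sub_add_cancel hle]
    rw [pow_add, mul_assoc, ← pow_add, Even.neg_one_pow ⟨bigOmega f, rfl⟩, mul_one]
  rw [Finset.sum_congr rfl hterm, ← Finset.mul_sum]
  show (-1:ℤ)^d * Tsum F d = _
  set q : ℤ := (Fintype.card F : ℤ) with hq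
  obtain ⟨d', rfl⟩ : ∃ d', d = d' + 1 := ⟨d - 1, by omega⟩
  have step : ∀ a ∈ Finset.range (d'+1), Tsum F a * q^(d'+1-a)
      = q * (Tsum F a * q^(d'-a)) := by
    intro a ha
    rw [Finset.mem_range] at ha
    have h3 : d' + 1 - a = (d' - a) + 1 := by omega
    rw [h3, pow_succ]
    ring
  have key : (∑ a ∈ Finset.range (d'+2), Tsum F a * q^(d'+1-a))
      = Tsum F (d'+1) + q * ∑ a ∈ Finset.range (d'+1), Tsum F a * q^(d'-a) := by
    rw [Finset.sum_range_succ, Nat.sub_self, pow_zero, mul_one, Finset.mul_sum,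
      Finset.sum_congr rfl step]
    ring
  have hU1 := U_eq (F := F) (d'+1)
  have hU0 := U_eq (F := F) d'
  rw [key, hU0] at hU1
  rcases Nat.even_or_odd (d'+1) with he | ho
  · have hnotd' : ¬ Even d' := by
      rintro ⟨m, hm⟩
      obtain ⟨m', hm'⟩ := he
      omega
    rw [if_pos he, if_neg hnotd', mul_zero] at hU1
    have hT : Tsum F (d'+1) = q ^ ((d'+1)/2) := by linarith
    rw [hT, Even.neg_one_pow he, one_mul]
    obtain ⟨m, hm⟩ := he
    congr 1
    omega
  · have hnot : ¬ Even (d'+1) := Nat.not_even_iff_odd.2 ho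
    have hd' : Even d' := by
      obtain ⟨m, hm⟩ := ho
      exact ⟨m, by omega⟩
    rw [if_neg hnot, if_pos hd'] at hU1
    have hT : Tsum F (d'+1) = -(q * q ^ (d'/2)) := by linarith
    have h5 : d'/2 + 1 = (d' + 1 + 1)/2 := by
      obtain ⟨m, hm⟩ := hd'
      omega
    have h4 : q * q ^ (d'/2) = q ^ ((d'+1+1)/2) := by
      rw [← h5]
      ring
    rw [hT, Odd.neg_one_pow ho, ← h4]
    ring
end

section
/- Let F_q be a finite field and d a positive integer. Say a monic polynomial f of degree d in F_q[x] has even type if (-1)^{d - \Omega(f)} = 1, where \Omega(f) is the total number of irreducible factors of f counted with multiplicity. Then 2 times the number of monic polynomials of degree d in F_q[x] with even type equals q^d + q^{\lceil d/2 \rceil}. -/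
open Polynomial Finset UniqueFactorizationMonoid

namespace Statement8


variable {F : Type*} [Field F]

/-- Monic polynomials of `natDegree n` are equivalent to `degreeLT F n`. -/
noncomputable def monicEquiv (n : ℕ) :
    {f : F[X] // f.Monic ∧ f.natDegree = n} ≃ Polynomial.degreeLT F n where
  toFun f := ⟨f.1 - X ^ n, by
    rcases f with ⟨f, hm, hdeg⟩
    rw [mem_degreeLT]
    rcases eq_or_ne f (X ^ n) with rfl | hne
    · simp only [sub_self, degree_zero]
      exact WithBot.bot_lt_coe n
    · have h1 : f.degree = (X ^ n : F[X]).degree := by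
        rw [degree_X_pow, degree_eq_natDegree hm.ne_zero, hdeg]
      calc (f - X ^ n).degree < f.degree := by
            refine degree_sub_lt h1 hm.ne_zero ?_
            simp [hm.leadingCoeff, (monic_X_pow n).leadingCoeff]
        _ = (n : WithBot ℕ) := by rw [degree_eq_natDegree hm.ne_zero, hdeg]⟩
  invFun g := ⟨g.1 + X ^ n, by
    have hg : (g : F[X]).degree < n := mem_degreeLT.1 g.2
    have hmon : (X ^ n + (g : F[X])).Monic := monic_X_pow_add hg
    have : (X ^ n + (g : F[X])).natDegree = n := by
      rcases eq_or_ne (g : F[X]) 0 with h0 | h0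
      · simp [h0]
      · have : (X ^ n + (g : F[X])).degree = (n : WithBot ℕ) := by
          rw [add_comm]
          rw [degree_add_eq_right_of_degree_lt (by simpa using hg), degree_X_pow]
        exact natDegree_eq_of_degree_eq_some this
    constructor
    · rwa [add_comm]
    · rwa [add_comm]⟩
  left_inv f := by ext1; simp
  right_inv g := by ext1; simp

noncomputable instance instFintypeMonic [Fintype F] (n : ℕ) :
    Fintype {f : F[X] // f.Monic ∧ f.natDegree = n} :=
  Fintype.ofEquiv (Fin n → F)
    ((monicEquiv n).trans (Polynomial.degreeLTEquiv F n).toEquiv).symm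

variable (F) [Fintype F] in
/-- The finset of monic polynomials of `natDegree n`. -/
noncomputable def M (n : ℕ) : Finset F[X] :=
  Finset.univ.map (Function.Embedding.subtype fun f : F[X] => f.Monic ∧ f.natDegree = n)

variable [Fintype F]

lemma mem_M {n : ℕ} {f : F[X]} : f ∈ M F n ↔ f.Monic ∧ f.natDegree = n := by
  simp [M]

variable (F) in
lemma card_M (n : ℕ) : (M F n).card = Fintype.card F ^ n := by
  rw [M, Finset.card_map, Finset.card_univ,
    Fintype.card_congr ((monicEquiv n).trans (Polynomial.degreeLTEquiv F n).toEquiv)]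
  simp

lemma M_zero : M F 0 = {1} := by
  ext f
  simp only [mem_M, Finset.mem_singleton]
  constructor
  · rintro ⟨hm, hd⟩; exact (hm.natDegree_eq_zero).1 hd
  · rintro rfl; exact ⟨monic_one, natDegree_one⟩


lemma bigOmega_one : bigOmega (1 : F[X]) = 0 := by
  rw [bigOmega, UniqueFactorizationMonoid.factors_one, Multiset.card_zero]

lemma bigOmega_mul {f g : F[X]} (hf : f ≠ 0) (hg : g ≠ 0) :
    bigOmega (f * g) = bigOmega f + bigOmega g := by
  simpa [bigOmega] using
    Multiset.card_eq_card_of_rel (UniqueFactorizationMonoid.factors_mul hf hg)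

lemma bigOmega_prime {p : F[X]} (hp : Prime p) : bigOmega p = 1 := by
  obtain ⟨r, -, hr⟩ := prime_factors_irreducible hp.irreducible
    ⟨fun b hb => prime_of_factor _ hb, UniqueFactorizationMonoid.factors_prod hp.ne_zero⟩
  rw [bigOmega, hr, Multiset.card_singleton]

lemma bigOmega_pow_mul {p g : F[X]} (hp : Prime p) (hg : g ≠ 0) (i : ℕ) :
    bigOmega (p ^ i * g) = i + bigOmega g := by
  induction i with
  | zero => simp
  | succ k ih =>
    have hpk : p ^ k * g ≠ 0 := mul_ne_zero (pow_ne_zero _ hp.ne_zero) hg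
    have : p ^ (k + 1) * g = p * (p ^ k * g) := by ring
    rw [this, bigOmega_mul hp.ne_zero hpk, bigOmega_prime hp, ih]
    omega

/-- Liouville-type sign. -/
noncomputable def lam (f : F[X]) : ℤ := (-1) ^ bigOmega f

lemma lam_pow_mul {p g : F[X]} (hp : Prime p) (hg : g ≠ 0) (i : ℕ) :
    lam (p ^ i * g) = (-1) ^ i * lam g := by
  rw [lam, lam, bigOmega_pow_mul hp hg, pow_add]

lemma bigOmega_le_natDegree {f : F[X]} (hf : f ≠ 0) : bigOmega f ≤ f.natDegree := by
  have hassoc := UniqueFactorizationMonoid.factors_prod hf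
  have h0 : (0 : F[X]) ∉ factors f := fun h0 =>
    (prime_of_factor _ h0).ne_zero rfl
  have hdeg : f.natDegree = (Multiset.map natDegree (factors f)).sum := by
    rw [← natDegree_multiset_prod _ h0]
    obtain ⟨u, hu⟩ := hassoc
    have hu0 : (u : F[X]) ≠ 0 := Units.ne_zero u
    conv_lhs => rw [← hu]
    rw [natDegree_mul (fun h => hf (by rw [← hu, h, zero_mul])) hu0,
      natDegree_eq_zero_of_isUnit u.isUnit, add_zero]
  rw [hdeg, bigOmega]
  calc Multiset.card (factors f) = (Multiset.map (fun _ => 1) (factors f)).sum := by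
        simp [Multiset.map_const']
    _ ≤ (Multiset.map natDegree (factors f)).sum := by
        refine Multiset.sum_map_le_sum_map _ _ fun p hp => ?_
        exact ((prime_of_factor _ hp).irreducible.natDegree_pos)


lemma pow_mul_inj {p a b : F[X]} (hp : Prime p) (ha : ¬ p ∣ a) (hb : ¬ p ∣ b)
    {i j : ℕ} (h : p ^ i * a = p ^ j * b) : i = j ∧ a = b := by
  wlog hij : i ≤ j generalizing i j a b
  · obtain ⟨h1, h2⟩ := this hb ha h.symm (le_of_not_ge hij)
    exact ⟨h1.symm, h2.symm⟩
  obtain ⟨k, rfl⟩ := Nat.exists_eq_add_of_le hij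
  have h' : a = p ^ k * b :=
    mul_left_cancel₀ (pow_ne_zero i hp.ne_zero) (by rw [h, pow_add, mul_assoc])
  cases k with
  | zero => simpa using h'
  | succ k => exact absurd ⟨p ^ k * b, by rw [h', pow_succ]; ring⟩ ha

lemma isSquare_pow_mul {p f₁ : F[X]} (hp : Prime p) (hf₁ : f₁ ≠ 0) (hnd : ¬ p ∣ f₁) (e : ℕ) :
    IsSquare (p ^ e * f₁) ↔ Even e ∧ IsSquare f₁ := by
  constructor
  · rintro ⟨r, hr⟩
    have hr0 : r ≠ 0 := by
      rintro rfl
      exact mul_ne_zero (pow_ne_zero _ hp.ne_zero) hf₁ (by simpa using hr)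
    obtain ⟨c, hc, hcnd⟩ :=
      (FiniteMultiplicity.of_prime_left hp hr0).exists_eq_pow_mul_and_not_dvd
    rw [hc] at hr
    have heq : p ^ e * f₁ = p ^ (multiplicity p r + multiplicity p r) * (c * c) := by
      rw [hr]; ring
    have hnd2 : ¬ p ∣ c * c := fun hd => hcnd ((hp.dvd_mul.1 hd).elim id id)
    obtain ⟨he, hsq⟩ := pow_mul_inj hp hnd hnd2 heq
    exact ⟨⟨_, he⟩, ⟨c, hsq⟩⟩
  · rintro ⟨⟨t, rfl⟩, ⟨s, hs⟩⟩
    exact ⟨p ^ t * s, by rw [hs]; ring⟩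

variable [Fintype F]

open scoped Classical in
noncomputable def mdiv (f : F[X]) : Finset F[X] :=
  (Finset.range (f.natDegree + 1)).biUnion fun i => (M F i).filter (· ∣ f)

lemma mem_mdiv {f g : F[X]} (hf : f ≠ 0) : g ∈ mdiv f ↔ g.Monic ∧ g ∣ f := by
  classical
  simp only [mdiv, Finset.mem_biUnion, Finset.mem_filter, mem_M, Finset.mem_range]
  constructor
  · rintro ⟨i, hi, ⟨hm, rfl⟩, hdvd⟩; exact ⟨hm, hdvd⟩
  · rintro ⟨hm, hdvd⟩
    exact ⟨g.natDegree, Nat.lt_succ_of_le (natDegree_le_of_dvd hdvd hf), ⟨hm, rfl⟩, hdvd⟩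

open scoped Classical in
lemma key : ∀ n : ℕ, ∀ f : F[X], f.Monic → f.natDegree = n →
    (∑ g ∈ mdiv f, lam g) = if IsSquare f then 1 else 0 := by
  intro n
  induction n using Nat.strong_induction_on with
  | _ n IH =>
    intro f hf hdeg
    rcases Nat.eq_zero_or_pos n with rfl | hn
    · have hf1 : f = 1 := hf.natDegree_eq_zero.1 hdeg
      subst hf1
      have hone : mdiv (1 : F[X]) = {1} := by
        ext g; rw [mem_mdiv one_ne_zero, Finset.mem_singleton]
        constructor
        · rintro ⟨hm, hdvd⟩; exact hm.eq_one_of_isUnit (isUnit_of_dvd_one hdvd)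
        · rintro rfl; exact ⟨monic_one, dvd_rfl⟩
      rw [hone, Finset.sum_singleton, if_pos IsSquare.one, lam, bigOmega_one, pow_zero]
    · have hf0 : f ≠ 0 := hf.ne_zero
      obtain ⟨g0, hg0_irr, hg0_dvd⟩ := exists_irreducible_of_natDegree_pos (hdeg ▸ hn)
      set p := normalize g0 with hp_def
      have hp_assoc : Associated g0 p := associated_normalize g0
      have hp_irr : Irreducible p := hp_assoc.irreducible hg0_irr
      have hp_prime : Prime p := hp_irr.prime
      have hp_monic : p.Monic := monic_normalize hg0_irr.ne_zero
      have hp_dvd : p ∣ f := hp_assoc.symm.dvd.trans hg0_dvd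
      obtain ⟨f₁, hfeq, hnd⟩ :=
        (FiniteMultiplicity.of_prime_left hp_prime hf0).exists_eq_pow_mul_and_not_dvd
      set e := multiplicity p f with he_def
      have hf₁_monic : f₁.Monic := (hp_monic.pow _).of_mul_monic_left (hfeq ▸ hf)
      have hf₁0 : f₁ ≠ 0 := hf₁_monic.ne_zero
      have he_pos : 1 ≤ e := by
        rcases Nat.eq_zero_or_pos e with h0 | h; swap; · exact h
        exact absurd (by rw [hfeq, h0, pow_zero, one_mul] at hp_dvd; exact hp_dvd) hnd
      have hdeg_lt : f₁.natDegree < n := by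
        have hsum : n = e * p.natDegree + f₁.natDegree := by
          rw [← hdeg, hfeq, (hp_monic.pow e).natDegree_mul hf₁_monic, natDegree_pow]
        have h1 : 1 ≤ e * p.natDegree := Nat.one_le_iff_ne_zero.2 (by
          have := hp_irr.natDegree_pos
          positivity)
        omega
      have hbij : (∑ g ∈ mdiv f, lam g)
          = ∑ x ∈ (range (e + 1)) ×ˢ mdiv f₁, lam (p ^ x.1 * x.2) := by
        refine (Finset.sum_bij (fun x _ => p ^ x.1 * x.2) ?_ ?_ ?_ ?_).symm
        · rintro ⟨i, g₁⟩ hx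
          simp only [Finset.mem_product, Finset.mem_range] at hx
          obtain ⟨hg₁m, hg₁dvd⟩ := (mem_mdiv hf₁0).1 hx.2
          rw [mem_mdiv hf0]
          exact ⟨(hp_monic.pow _).mul hg₁m,
            hfeq ▸ mul_dvd_mul (pow_dvd_pow p (Nat.lt_succ_iff.1 hx.1)) hg₁dvd⟩
        · rintro ⟨i, g₁⟩ hx ⟨j, g₂⟩ hy heq
          simp only [Finset.mem_product, Finset.mem_range] at hx hy
          have h1 : ¬ p ∣ g₁ := fun hd => hnd (hd.trans ((mem_mdiv hf₁0).1 hx.2).2)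
          have h2 : ¬ p ∣ g₂ := fun hd => hnd (hd.trans ((mem_mdiv hf₁0).1 hy.2).2)
          obtain ⟨h3, h4⟩ := pow_mul_inj hp_prime h1 h2 heq
          exact Prod.ext h3 h4
        · intro g hg
          obtain ⟨hgm, hgdvd⟩ := (mem_mdiv hf0).1 hg
          obtain ⟨g₁, hgeq, hgnd⟩ :=
            (FiniteMultiplicity.of_prime_left hp_prime hgm.ne_zero).exists_eq_pow_mul_and_not_dvd
          set i := multiplicity p g with hi_def
          have hg₁m : g₁.Monic := (hp_monic.pow _).of_mul_monic_left (hgeq ▸ hgm)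
          have hg₁dvd : g₁ ∣ f₁ := by
            have hd : g₁ ∣ p ^ e * f₁ :=
              hfeq ▸ (dvd_trans ⟨p ^ i, by rw [hgeq]; ring⟩ hgdvd)
            exact (hp_irr.coprime_pow_of_not_dvd e hgnd).dvd_of_dvd_mul_left hd
          have hie : i ≤ e := by
            by_contra hie
            push_neg at hie
            have h5 : p ^ (e + 1) ∣ p ^ e * f₁ :=
              (pow_dvd_pow p (by omega)).trans ((Dvd.intro _ hgeq.symm).trans (hfeq ▸ hgdvd))
            rw [pow_succ] at h5
            exact hnd ((mul_dvd_mul_iff_left (pow_ne_zero e hp_prime.ne_zero)).1 h5)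
          refine ⟨(i, g₁), ?_, hgeq.symm⟩
          simp only [Finset.mem_product, Finset.mem_range, Nat.lt_succ_iff]
          exact ⟨hie, (mem_mdiv hf₁0).2 ⟨hg₁m, hg₁dvd⟩⟩
        · intros; rfl
      rw [hbij, Finset.sum_product]
      have hrow : ∀ i ∈ range (e + 1), (∑ g₁ ∈ mdiv f₁, lam (p ^ i * g₁))
          = (-1) ^ i * ∑ g₁ ∈ mdiv f₁, lam g₁ := by
        intro i _
        rw [Finset.mul_sum]
        exact Finset.sum_congr rfl fun g₁ hg₁ =>
          lam_pow_mul hp_prime (((mem_mdiv hf₁0).1 hg₁).1.ne_zero) i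
      rw [Finset.sum_congr rfl hrow, ← Finset.sum_mul, neg_one_geom_sum,
        IH _ hdeg_lt f₁ hf₁_monic rfl]
      rw [hfeq]
      simp only [isSquare_pow_mul hp_prime hf₁0 hnd e]
      by_cases he : Even e <;> by_cases hs : IsSquare f₁ <;>
        simp [he, hs, Nat.even_add_one]


lemma monic_sq_inj {A B : F[X]} (hA : A.Monic) (hB : B.Monic) (h : A * A = B * B) : A = B := by
  rcases mul_self_eq_mul_self_iff.1 h with h1 | h1
  · exact h1
  · have hlc : (-1 : F) = 1 := by
      have h2 := hA.leadingCoeff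
      rw [h1, leadingCoeff_neg, hB.leadingCoeff] at h2
      exact h2
    have h3 : (-1 : F[X]) = 1 := by
      have := congrArg Polynomial.C hlc
      simpa using this
    rw [h1, ← neg_one_mul, h3, one_mul]

open scoped Classical in
lemma sum_isSquare (n : ℕ) :
    (∑ f ∈ M F n, if IsSquare f then (1 : ℤ) else 0)
      = if Even n then (Fintype.card F : ℤ) ^ (n / 2) else 0 := by
  rw [Finset.sum_boole]
  by_cases hn : Even n
  · rw [if_pos hn]
    obtain ⟨m, rfl⟩ := hn
    have hmm : (m + m) / 2 = m := by omega
    rw [hmm]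
    have hc : ((M F (m + m)).filter IsSquare).card = (M F m).card := by
      refine (Finset.card_bij (fun g _ => g * g) ?_ ?_ ?_).symm
      · intro g hg
        obtain ⟨hgm, hgd⟩ := mem_M.1 hg
        rw [Finset.mem_filter]
        exact ⟨mem_M.2 ⟨hgm.mul hgm, by rw [hgm.natDegree_mul hgm, hgd]⟩, ⟨g, rfl⟩⟩
      · intro g₁ h₁ g₂ h₂ heq
        exact monic_sq_inj (mem_M.1 h₁).1 (mem_M.1 h₂).1 heq
      · intro f hf
        rw [Finset.mem_filter] at hf
        obtain ⟨hfM, r, hr⟩ := hf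
        obtain ⟨hfm, hfd⟩ := mem_M.1 hfM
        have hr0 : r ≠ 0 := by rintro rfl; exact hfm.ne_zero (by simpa using hr)
        have hu : r.leadingCoeff * r.leadingCoeff = 1 := by
          have := hfm.leadingCoeff
          rw [hr, leadingCoeff_mul] at this
          exact this
        set A := C r.leadingCoeff * r with hA_def
        have hAm : A.Monic := by
          rw [Monic, hA_def, leadingCoeff_mul, leadingCoeff_C, hu]
        have hAA : A * A = f := by
          rw [hA_def, hr]
          rw [show C r.leadingCoeff * r * (C r.leadingCoeff * r)
            = C (r.leadingCoeff * r.leadingCoeff) * (r * r) by rw [C_mul]; ring]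
          rw [hu, C_1, one_mul]
        have hAd : A.natDegree = m := by
          have h2 := hAm.natDegree_mul hAm
          rw [hAA, hfd] at h2
          omega
        exact ⟨A, mem_M.2 ⟨hAm, hAd⟩, hAA⟩
    rw [hc, card_M]
    push_cast; ring
  · rw [if_neg hn]
    have hempty : (M F n).filter IsSquare = ∅ := by
      ext f
      simp only [Finset.mem_filter, Finset.notMem_empty, iff_false, not_and]
      intro hfM
      rintro ⟨r, hr⟩
      obtain ⟨hfm, hfd⟩ := mem_M.1 hfM
      have hr0 : r ≠ 0 := by rintro rfl; exact hfm.ne_zero (by simpa using hr)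
      refine hn ?_
      have : f.natDegree = r.natDegree + r.natDegree := by
        rw [hr, natDegree_mul hr0 hr0]
      exact ⟨r.natDegree, by omega⟩
    rw [hempty]
    simp

variable (F) in
noncomputable def a (n : ℕ) : ℤ := ∑ f ∈ M F n, lam f

lemma a_zero : a F 0 = 1 := by
  rw [a, M_zero, Finset.sum_singleton, lam, bigOmega_one, pow_zero]

open scoped Classical in
lemma global (n : ℕ) :
    (∑ k ∈ range (n + 1), a F k * (Fintype.card F : ℤ) ^ (n - k))
      = if Even n then (Fintype.card F : ℤ) ^ (n / 2) else 0 := by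
  have h1 : ∀ k ∈ range (n + 1), a F k * (Fintype.card F : ℤ) ^ (n - k)
      = ∑ x ∈ (M F k) ×ˢ (M F (n - k)), lam x.1 := by
    intro k _
    rw [Finset.sum_product, a, Finset.sum_mul]
    refine Finset.sum_congr rfl fun g _ => ?_
    have hconst : (∑ y ∈ M F (n - k), lam (g, y).1) = ∑ _y ∈ M F (n - k), lam g :=
      Finset.sum_congr rfl fun _ _ => rfl
    rw [hconst, Finset.sum_const, card_M, nsmul_eq_mul]
    push_cast; ring
  rw [Finset.sum_congr rfl h1]
  have hdisj : (↑(range (n + 1)) : Set ℕ).PairwiseDisjoint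
      (fun k => (M F k) ×ˢ (M F (n - k))) := by
    intro i _ j _ hij
    refine Finset.disjoint_left.2 fun x hxi hxj => hij ?_
    rw [Finset.mem_product] at hxi hxj
    rw [← (mem_M.1 hxi.1).2, ← (mem_M.1 hxj.1).2]
  rw [← Finset.sum_biUnion hdisj]
  have hmaps : ∀ x ∈ (range (n + 1)).biUnion (fun k => (M F k) ×ˢ (M F (n - k))),
      x.1 * x.2 ∈ M F n := by
    intro x hx
    rw [Finset.mem_biUnion] at hx
    obtain ⟨k, hk, hx⟩ := hx
    rw [Finset.mem_range] at hk
    rw [Finset.mem_product] at hx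
    obtain ⟨h1m, h1d⟩ := mem_M.1 hx.1
    obtain ⟨h2m, h2d⟩ := mem_M.1 hx.2
    exact mem_M.2 ⟨h1m.mul h2m, by rw [h1m.natDegree_mul h2m, h1d, h2d]; omega⟩
  rw [← Finset.sum_fiberwise_of_maps_to hmaps (fun x => lam x.1)]
  have hinner : ∀ f ∈ M F n,
      (∑ x ∈ ((range (n + 1)).biUnion (fun k => (M F k) ×ˢ (M F (n - k)))).filter
        (fun x => x.1 * x.2 = f), lam x.1)
      = if IsSquare f then 1 else 0 := by
    intro f hf
    obtain ⟨hfm, hfd⟩ := mem_M.1 hf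
    rw [← key n f hfm hfd]
    refine Finset.sum_bij (fun x _ => x.1) ?_ ?_ ?_ ?_
    · intro x hx
      rw [Finset.mem_filter] at hx
      obtain ⟨hxB, hxf⟩ := hx
      rw [Finset.mem_biUnion] at hxB
      obtain ⟨k, -, hxk⟩ := hxB
      rw [Finset.mem_product] at hxk
      exact (mem_mdiv hfm.ne_zero).2 ⟨(mem_M.1 hxk.1).1, ⟨x.2, hxf.symm⟩⟩
    · intro x hx y hy heq
      rw [Finset.mem_filter] at hx hy
      have hx1 : x.1 ≠ 0 := fun h0 => hfm.ne_zero (by rw [← hx.2, h0, zero_mul])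
      have h2 : x.2 = y.2 := mul_left_cancel₀ hx1 (by rw [hx.2, heq, hy.2])
      exact Prod.ext heq h2
    · intro g hg
      obtain ⟨hgm, hgdvd⟩ := (mem_mdiv hfm.ne_zero).1 hg
      obtain ⟨h, rfl⟩ := hgdvd
      have hhm : h.Monic := hgm.of_mul_monic_left hfm
      have hd : g.natDegree + h.natDegree = n := by
        rw [← hgm.natDegree_mul hhm]; exact hfd
      refine ⟨(g, h), ?_, rfl⟩
      rw [Finset.mem_filter, Finset.mem_biUnion]
      exact ⟨⟨g.natDegree, Finset.mem_range.2 (by omega),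
        Finset.mem_product.2 ⟨mem_M.2 ⟨hgm, rfl⟩,
          mem_M.2 ⟨hhm, show h.natDegree = n - g.natDegree by omega⟩⟩⟩, rfl⟩
    · intros; rfl
  rw [Finset.sum_congr rfl hinner, sum_isSquare]


lemma a_eval (n : ℕ) (hn : 0 < n) :
    a F n = (-1) ^ n * (Fintype.card F : ℤ) ^ ((n + 1) / 2) := by
  obtain ⟨m, rfl⟩ := Nat.exists_eq_succ_of_ne_zero hn.ne'
  set q : ℤ := (Fintype.card F : ℤ) with hq_def
  have hq := global (F := F) (m + 1)
  have hq' := global (F := F) m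
  have hsplit : (∑ k ∈ range (m + 1 + 1), a F k * q ^ (m + 1 - k))
      = q * (∑ k ∈ range (m + 1), a F k * q ^ (m - k)) + a F (m + 1) := by
    rw [Finset.sum_range_succ]
    have hstep : ∀ k ∈ range (m + 1), a F k * q ^ (m + 1 - k) = q * (a F k * q ^ (m - k)) := by
      intro k hk
      rw [Finset.mem_range] at hk
      rw [show m + 1 - k = (m - k) + 1 by omega, pow_succ]
      ring
    rw [Finset.sum_congr rfl hstep, ← Finset.mul_sum]
    simp
  have hval : a F (m + 1) = (if Even (m + 1) then q ^ ((m + 1) / 2) else 0)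
      - q * (if Even m then q ^ (m / 2) else 0) := by
    rw [← hq, ← hq', hsplit]; ring
  rcases Nat.even_or_odd m with ⟨t, rfl⟩ | ⟨t, rfl⟩
  · rw [hval, if_neg (Nat.not_even_iff_odd.2 ⟨t, by ring⟩), if_pos ⟨t, rfl⟩,
      Odd.neg_one_pow (⟨t, by ring⟩ : Odd (t + t + 1)),
      show (t + t + 1 + 1) / 2 = (t + t) / 2 + 1 by omega, pow_succ]
    ring
  · rw [hval, if_pos ⟨t + 1, by ring⟩, if_neg (Nat.not_even_iff_odd.2 ⟨t, rfl⟩),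
      Even.neg_one_pow (⟨t + 1, by ring⟩ : Even (2 * t + 1 + 1)),
      show (2 * t + 1 + 1 + 1) / 2 = (2 * t + 1 + 1) / 2 by omega]
    ring


end Statement8


open Statement8 in
/-- Twice the number of monic degree-`d` polynomials over `F_q` of even type
(`(-1)^(d - Ω(f)) = 1`) equals `q^d + q^⌈d/2⌉`. -/
theorem statement8 (F : Type*) [Field F] [Fintype F] (d : ℕ) (hd : 0 < d) :
    2 * Nat.card {f : F[X] // f.Monic ∧ f.natDegree = d ∧
        (-1 : ℤ) ^ (d - bigOmega f) = 1} =
      Fintype.card F ^ d + Fintype.card F ^ ((d + 1) / 2) := by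
  classical
  set q : ℤ := (Fintype.card F : ℤ) with hq_def
  set P : F[X] → Prop := fun f => (-1 : ℤ) ^ (d - bigOmega f) = 1 with hP_def
  set s : Finset F[X] := M F d with hs_def
  set E : ℕ := (s.filter P).card with hE_def
  set O : ℕ := (s.filter (fun f => ¬ P f)).card with hO_def
  have hcard : Nat.card {f : F[X] // f.Monic ∧ f.natDegree = d ∧ P f} = E := by
    rw [Nat.card_congr (Equiv.subtypeEquivRight (q := fun f => f ∈ s.filter P)
      (fun f => by simp [hs_def, Finset.mem_filter, mem_M, and_assoc]))]
    exact Nat.card_eq_finsetCard _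
  have hsum1 : (∑ f ∈ s, (-1 : ℤ) ^ (d - bigOmega f)) = (E : ℤ) - O := by
    rw [← Finset.sum_filter_add_sum_filter_not s P]
    have e1 : (∑ f ∈ s.filter P, (-1 : ℤ) ^ (d - bigOmega f)) = (E : ℤ) := by
      rw [Finset.sum_congr rfl (fun f hf => (Finset.mem_filter.1 hf).2)]
      simp [hE_def]; rfl
    have e2 : (∑ f ∈ s.filter (fun f => ¬ P f), (-1 : ℤ) ^ (d - bigOmega f)) = -(O : ℤ) := by
      have : ∀ f ∈ s.filter (fun f => ¬ P f), (-1 : ℤ) ^ (d - bigOmega f) = -1 := by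
        intro f hf
        have hnp := (Finset.mem_filter.1 hf).2
        rcases neg_one_pow_eq_or ℤ (d - bigOmega f) with h | h
        · exact absurd h hnp
        · exact h
      rw [Finset.sum_congr rfl this]
      simp [hO_def, mul_comm]
    rw [e1, e2]; ring
  have hsum2 : (∑ f ∈ s, (-1 : ℤ) ^ (d - bigOmega f)) = (-1) ^ d * a F d := by
    rw [a, Finset.mul_sum]
    refine Finset.sum_congr rfl fun f hf => ?_
    obtain ⟨hfm, hfd⟩ := mem_M.1 hf
    have hΩ : bigOmega f ≤ d := hfd ▸ bigOmega_le_natDegree hfm.ne_zero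
    have h2 : (-1 : ℤ) ^ d = (-1) ^ (d - bigOmega f) * (-1) ^ bigOmega f := by
      rw [← pow_add, Nat.sub_add_cancel hΩ]
    rw [lam, h2, mul_assoc, ← pow_add, Even.neg_one_pow ⟨bigOmega f, rfl⟩, mul_one]
  have hEO : (E : ℤ) - O = q ^ ((d + 1) / 2) := by
    rw [← hsum1, hsum2, a_eval d hd, ← mul_assoc, ← mul_pow]
    simp; rfl
  have hEO2 : (E : ℤ) + O = q ^ d := by
    have := Finset.card_filter_add_card_filter_not (s := s) P
    rw [hs_def] at this
    rw [hE_def, hO_def]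
    push_cast [hs_def]
    rw_mod_cast [this, card_M]
    push_cast; ring
  have : 2 * (E : ℤ) = q ^ d + q ^ ((d + 1) / 2) := by linarith
  rw [hq_def] at this
  rw [hcard]
  exact_mod_cast this
end

section
/- Let F_q be a finite field and d an integer with d \geq 2. For a monic squarefree polynomial f of degree d in F_q[x], let \Omega(f) denote the number of irreducible factors of f (counted with multiplicity, which is without multiplicity since f is squarefree). Then \sum_{f} (-1)^{d - \Omega(f)} = 0, where the sum runs over all monic squarefree polynomials f of degree d in F_q[x]. Equivalently, exactly half of the monic squarefree polynomials of degree d in F_q[x] have even factorization type. -/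
open Polynomial

namespace Statement9Aux

open UniqueFactorizationMonoid Finset

open scoped Classical

variable (F : Type*) [Field F] [Fintype F]

/-- Monic polynomials of degree `n` correspond to their lower-order coefficients. -/
noncomputable def MnEquiv (n : ℕ) :
    {p : F[X] // p.Monic ∧ p.natDegree = n} ≃ (Fin n → F) :=
  (monicEquivDegreeLT n).trans (degreeLTEquiv F n).toEquiv

noncomputable instance (n : ℕ) : Fintype {p : F[X] // p.Monic ∧ p.natDegree = n} :=
  Fintype.ofEquiv _ (MnEquiv F n).symm

/-- The finset of monic polynomials of degree `n`. -/
noncomputable def Mn (n : ℕ) : Finset F[X] :=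
  Finset.univ.map (Function.Embedding.subtype (fun p : F[X] => p.Monic ∧ p.natDegree = n))

variable {F}

lemma mem_Mn {n : ℕ} {f : F[X]} : f ∈ Mn F n ↔ f.Monic ∧ f.natDegree = n := by
  simp [Mn]

variable (F)

lemma card_Mn (n : ℕ) : (Mn F n).card = Fintype.card F ^ n := by
  rw [Mn, Finset.card_map, Finset.card_univ, Fintype.card_congr (MnEquiv F n)]
  simp

lemma finite_SFset (n : ℕ) :
    {f : F[X] | f.Monic ∧ f.natDegree = n ∧ Squarefree f}.Finite :=
  Set.Finite.subset (Mn F n).finite_toSet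
    (fun f hf => by rw [mem_coe, mem_Mn]; exact ⟨hf.1, hf.2.1⟩)

/-- The finset of squarefree monic polynomials of degree `n`. -/
noncomputable def SF (n : ℕ) : Finset F[X] := (finite_SFset F n).toFinset

variable {F}

lemma mem_SF {n : ℕ} {f : F[X]} :
    f ∈ SF F n ↔ f.Monic ∧ f.natDegree = n ∧ Squarefree f :=
  Set.Finite.mem_toFinset _

variable (F)

/-- The signed count of squarefree monic polynomials of degree `n`. -/
noncomputable def Ssum (n : ℕ) : ℤ := ∑ f ∈ SF F n, (-1) ^ (bigOmega f)

variable {F}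

lemma bigOmega_eq {f : F[X]} :
    bigOmega f = Multiset.card (normalizedFactors f) := by
  rw [normalizedFactors, Multiset.card_map, bigOmega]

lemma card_le_sum_aux {m : Multiset ℕ} (h : ∀ x ∈ m, 1 ≤ x) :
    Multiset.card m ≤ m.sum := by
  induction m using Multiset.induction with
  | empty => simp
  | cons a s ih =>
    simp only [Multiset.card_cons, Multiset.sum_cons]
    have ha := h a (Multiset.mem_cons_self a s)
    have := ih (fun x hx => h x (Multiset.mem_cons_of_mem hx))
    omega

lemma monic_of_normalized_factor {f p : F[X]} (hp : p ∈ normalizedFactors f) :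
    p.Monic := by
  have h1 : normalize p = p := normalize_normalized_factor p hp
  have h0 : p ≠ 0 := (prime_of_normalized_factor p hp).ne_zero
  rw [← h1]
  exact monic_normalize h0

lemma natDegree_pos_of_normalized_factor {f p : F[X]} (hp : p ∈ normalizedFactors f) :
    1 ≤ p.natDegree :=
  natDegree_pos_iff_degree_pos.mpr
    (degree_pos_of_irreducible (irreducible_of_normalized_factor p hp))

lemma prod_normalizedFactors_eq {f : F[X]} (hf : f.Monic) :
    (normalizedFactors f).prod = f := by
  have hassoc := prod_normalizedFactors hf.ne_zero
  have hmono : (normalizedFactors f).prod.Monic := by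
    rw [← Multiset.map_id (normalizedFactors f)]
    exact monic_multiset_prod_of_monic _ id (fun p hp => monic_of_normalized_factor hp)
  exact hassoc.eq_of_normalized hmono.normalize_eq_self hf.normalize_eq_self

lemma bigOmega_le {f : F[X]} (hf : f.Monic) : bigOmega f ≤ f.natDegree := by
  rw [bigOmega_eq]
  have h0 : (0 : F[X]) ∉ normalizedFactors f :=
    fun h => (prime_of_normalized_factor 0 h).ne_zero rfl
  have hdeg : f.natDegree = ((normalizedFactors f).map natDegree).sum := by
    conv_lhs => rw [← prod_normalizedFactors_eq hf]
    exact natDegree_multiset_prod _ h0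
  rw [hdeg, ← Multiset.card_map natDegree]
  exact card_le_sum_aux (by
    intro x hx
    obtain ⟨p, hp, rfl⟩ := Multiset.mem_map.mp hx
    exact natDegree_pos_of_normalized_factor hp)

/-- The sum of `(-1)^Ω(f)` over the squarefree monic divisors of a monic nonconstant `h`
is zero. -/
lemma key_inner {h : F[X]} (hm : h.Monic) (hd : 1 ≤ h.natDegree) :
    ∑ f ∈ ((range (h.natDegree + 1)).biUnion (SF F)).filter (· ∣ h),
      (-1 : ℤ) ^ (bigOmega f) = 0 := by
  have hh0 : h ≠ 0 := hm.ne_zero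
  set P : Finset F[X] := (normalizedFactors h).toFinset with hP
  have hPne : P.Nonempty := by
    rw [hP, Multiset.toFinset_nonempty]
    intro hzero
    have := prod_normalizedFactors_eq hm
    rw [hzero, Multiset.prod_zero] at this
    have : h.natDegree = 0 := by rw [← this]; simp
    omega
  -- facts about subsets T of P
  have hprodfacts : ∀ T : Finset F[X], T ⊆ P →
      normalizedFactors (T.prod id) = T.val := by
    intro T hT
    have hprime : ∀ p ∈ T.val, Prime p := fun p hp =>
      prime_of_normalized_factor p (Multiset.mem_toFinset.mp (hT hp))
    have h0T : (0 : F[X]) ∉ T.val := fun h0 => (hprime 0 h0).ne_zero rfl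
    have : T.prod id = T.val.prod := by
      rw [Finset.prod, Multiset.map_id]
    rw [this, normalizedFactors_multiset_prod _ h0T]
    have : T.val.map normalizedFactors = T.val.map (fun p => {p}) := by
      apply Multiset.map_congr rfl
      intro p hp
      rw [normalizedFactors_irreducible (hprime p hp).irreducible,
        normalize_normalized_factor p (Multiset.mem_toFinset.mp (hT hp))]
    rw [this, Multiset.sum_map_singleton]
  have hmonicT : ∀ T : Finset F[X], T ⊆ P → (T.prod id).Monic := by
    intro T hT
    exact monic_prod_of_monic _ _ (fun p hp =>
      monic_of_normalized_factor (Multiset.mem_toFinset.mp (hT hp)))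
  have hdvdT : ∀ T : Finset F[X], T ⊆ P → T.prod id ∣ h := by
    intro T hT
    have hle : T.val ≤ normalizedFactors h := by
      rw [Multiset.le_iff_subset T.nodup]
      intro p hp
      exact Multiset.mem_toFinset.mp (hT hp)
    have : T.prod id = T.val.prod := by rw [Finset.prod, Multiset.map_id]
    rw [this]
    calc T.val.prod ∣ (normalizedFactors h).prod := Multiset.prod_dvd_prod_of_le hle
      _ = h := prod_normalizedFactors_eq hm
  rw [← Finset.sum_powerset_neg_one_pow_card_of_nonempty hPne]
  apply Finset.sum_nbij' (i := fun f => (normalizedFactors f).toFinset)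
    (j := fun T => T.prod id)
  · -- maps into powerset
    intro f hf
    rw [mem_filter] at hf
    obtain ⟨hfb, hfd⟩ := hf
    rw [mem_biUnion] at hfb
    obtain ⟨k, _, hfk⟩ := hfb
    rw [mem_SF] at hfk
    rw [mem_powerset, hP]
    intro p hp
    rw [Multiset.mem_toFinset] at hp ⊢
    exact Multiset.mem_of_le
      ((dvd_iff_normalizedFactors_le_normalizedFactors hfk.1.ne_zero hh0).mp hfd) hp
  · -- maps into filter
    intro T hT
    rw [mem_powerset] at hT
    have hdvd := hdvdT T hT
    have hmon := hmonicT T hT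
    have hnf := hprodfacts T hT
    have hne : T.prod id ≠ 0 := hmon.ne_zero
    rw [mem_filter, mem_biUnion]
    refine ⟨⟨(T.prod id).natDegree, ?_, ?_⟩, hdvd⟩
    · rw [mem_range, Nat.lt_succ_iff]
      exact natDegree_le_of_dvd hdvd hh0
    · rw [mem_SF]
      refine ⟨hmon, rfl, ?_⟩
      rw [squarefree_iff_nodup_normalizedFactors hne, hnf]
      exact T.nodup
  · -- left inverse
    intro f hf
    rw [mem_filter] at hf
    obtain ⟨hfb, hfd⟩ := hf
    rw [mem_biUnion] at hfb
    obtain ⟨k, _, hfk⟩ := hfb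
    rw [mem_SF] at hfk
    obtain ⟨hfm, _, hsq⟩ := hfk
    have hnd : (normalizedFactors f).Nodup :=
      (squarefree_iff_nodup_normalizedFactors hfm.ne_zero).mp hsq
    rw [Finset.prod, Multiset.map_id, Multiset.toFinset_val,
      Multiset.dedup_eq_self.mpr hnd]
    exact prod_normalizedFactors_eq hfm
  · -- right inverse
    intro T hT
    rw [mem_powerset] at hT
    rw [hprodfacts T hT]
    exact T.val_toFinset
  · -- values agree
    intro f hf
    congr 1
    rw [mem_filter] at hf
    obtain ⟨hfb, _⟩ := hf
    rw [mem_biUnion] at hfb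
    obtain ⟨k, _, hfk⟩ := hfb
    rw [mem_SF] at hfk
    have hnd : (normalizedFactors f).Nodup :=
      (squarefree_iff_nodup_normalizedFactors hfk.1.ne_zero).mp hfk.2.2
    rw [bigOmega_eq, Finset.card_def, Multiset.toFinset_val,
      Multiset.dedup_eq_self.mpr hnd]

/-- The number of monic degree-`d` multiples of a fixed monic degree-`k` polynomial. -/
lemma card_dvd_filter {f : F[X]} (hf : f.Monic) {k d : ℕ} (hdeg : f.natDegree = k)
    (hkd : k ≤ d) :
    ((Mn F d).filter (f ∣ ·)).card = Fintype.card F ^ (d - k) := by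
  have hf0 : f ≠ 0 := hf.ne_zero
  rw [← card_Mn F (d - k)]
  apply Finset.card_nbij' (i := fun h => h / f) (j := fun g => f * g)
  · intro h hh
    rw [mem_coe, mem_filter, mem_Mn] at hh
    obtain ⟨⟨hmon, hdd⟩, hdvd⟩ := hh
    have hmul : f * (h / f) = h := EuclideanDomain.mul_div_cancel' hf0 hdvd
    have hq0 : h / f ≠ 0 := by
      intro h0
      rw [h0, mul_zero] at hmul
      exact hmon.ne_zero hmul.symm
    have hqm : (h / f).Monic := by
      have hm2 : (f * (h / f)).Monic := by rw [hmul]; exact hmon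
      exact hf.of_mul_monic_left hm2
    rw [mem_coe, mem_Mn]
    refine ⟨hqm, ?_⟩
    have := natDegree_mul hf0 hq0
    rw [hmul] at this
    beta_reduce
    omega
  · intro g hg
    rw [mem_coe, mem_Mn] at hg
    obtain ⟨hgm, hgd⟩ := hg
    rw [mem_coe, mem_filter, mem_Mn]
    refine ⟨⟨hf.mul hgm, ?_⟩, Dvd.intro g rfl⟩
    rw [natDegree_mul hf0 hgm.ne_zero, hdeg, hgd]
    omega
  · intro h hh
    rw [mem_coe, mem_filter] at hh
    exact EuclideanDomain.mul_div_cancel' hf0 hh.2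
  · intro g hg
    rw [mem_coe, mem_Mn] at hg
    exact mul_div_cancel_left₀ g hf0
  
variable (F)

/-- The zeta-function identity: `∑_{k ≤ d} S_k q^{d-k} = 0` for `d ≥ 1`. -/
lemma key_identity (d : ℕ) (hd : 1 ≤ d) :
    ∑ k ∈ range (d + 1), Ssum F k * (Fintype.card F : ℤ) ^ (d - k) = 0 := by
  have step1 : ∀ k ∈ range (d + 1),
      Ssum F k * (Fintype.card F : ℤ) ^ (d - k)
        = ∑ f ∈ SF F k, ∑ h ∈ Mn F d, if f ∣ h then (-1 : ℤ) ^ (bigOmega f) else 0 := by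
    intro k hk
    rw [mem_range, Nat.lt_succ_iff] at hk
    rw [Ssum, Finset.sum_mul]
    apply Finset.sum_congr rfl
    intro f hf
    rw [mem_SF] at hf
    rw [← Finset.sum_filter, Finset.sum_const,
      card_dvd_filter hf.1 hf.2.1 hk]
    push_cast
    ring
  rw [Finset.sum_congr rfl step1]
  have hdisj : ∀ k₁ ∈ range (d+1), ∀ k₂ ∈ range (d+1), k₁ ≠ k₂ →
      Disjoint (SF F k₁) (SF F k₂) := by
    intro k₁ _ k₂ _ hne
    rw [Finset.disjoint_left]
    intro f hf1 hf2
    rw [mem_SF] at hf1 hf2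
    exact hne (hf1.2.1 ▸ hf2.2.1)
  rw [← Finset.sum_biUnion hdisj, Finset.sum_comm]
  apply Finset.sum_eq_zero
  intro h hh
  rw [mem_Mn] at hh
  rw [← Finset.sum_filter]
  have := key_inner (F := F) hh.1 (hh.2 ▸ hd)
  rw [hh.2] at this
  exact this

lemma Ssum_eq_zero (d : ℕ) (hd : 2 ≤ d) : Ssum F d = 0 := by
  obtain ⟨e, rfl⟩ : ∃ e, d = e + 1 := ⟨d - 1, by omega⟩
  have he : 1 ≤ e := by omega
  have A := key_identity F (e + 1) (by omega)
  have B := key_identity F e he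
  rw [Finset.sum_range_succ] at A
  have hrw : ∑ k ∈ range (e + 1), Ssum F k * (Fintype.card F : ℤ) ^ (e + 1 - k)
      = (Fintype.card F : ℤ) * ∑ k ∈ range (e + 1), Ssum F k * (Fintype.card F : ℤ) ^ (e - k) := by
    rw [Finset.mul_sum]
    apply Finset.sum_congr rfl
    intro k hk
    rw [mem_range, Nat.lt_succ_iff] at hk
    have : e + 1 - k = (e - k) + 1 := by omega
    rw [this, pow_succ]
    ring
  rw [hrw, B, mul_zero, zero_add] at A
  simpa using A

end Statement9Aux

/-- For `d ≥ 2`, the sum of `(-1)^(d - Ω(f))` over all monic squarefree degree-`d`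
polynomials over `F_q` equals `0`: exactly half of them have even factorization type. -/
theorem statement9 (F : Type*) [Field F] [Fintype F] (d : ℕ) (hd : 2 ≤ d) :
    ∑ᶠ f ∈ {f : F[X] | f.Monic ∧ f.natDegree = d ∧ Squarefree f},
      (-1 : ℤ) ^ (d - bigOmega f) = 0 := by
  have hcoe : {f : F[X] | f.Monic ∧ f.natDegree = d ∧ Squarefree f}
      = ↑(Statement9Aux.SF F d) := (Set.Finite.coe_toFinset _).symm
  rw [hcoe, finsum_mem_coe_finset]
  have hsum : ∑ f ∈ Statement9Aux.SF F d, (-1 : ℤ) ^ (d - bigOmega f)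
      = ∑ f ∈ Statement9Aux.SF F d, (-1 : ℤ) ^ d * (-1) ^ (bigOmega f) := by
    apply Finset.sum_congr rfl
    intro f hf
    rw [Statement9Aux.mem_SF] at hf
    have hle : bigOmega f ≤ d := hf.2.1 ▸ Statement9Aux.bigOmega_le hf.1
    have h1 : (-1 : ℤ) ^ (d - bigOmega f) * (-1) ^ (bigOmega f) = (-1) ^ d := by
      rw [← pow_add, Nat.sub_add_cancel hle]
    have h2 : ((-1 : ℤ) ^ (bigOmega f)) * ((-1) ^ (bigOmega f)) = 1 := by
      rw [← pow_add, ← two_mul, pow_mul]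
      norm_num
    calc (-1 : ℤ) ^ (d - bigOmega f)
        = (-1 : ℤ) ^ (d - bigOmega f) * (((-1) ^ (bigOmega f)) * ((-1) ^ (bigOmega f))) := by
          rw [h2, mul_one]
      _ = ((-1 : ℤ) ^ (d - bigOmega f) * (-1) ^ (bigOmega f)) * (-1) ^ (bigOmega f) := by ring
      _ = (-1 : ℤ) ^ d * (-1) ^ (bigOmega f) := by rw [h1]
  rw [hsum, ← Finset.mul_sum]
  rw [show ∑ f ∈ Statement9Aux.SF F d, (-1 : ℤ) ^ (bigOmega f) = Statement9Aux.Ssum F d from rfl,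
    Statement9Aux.Ssum_eq_zero F d hd, mul_zero]
end
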